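/- Let p, q : ℝ^d → ℝ≥0 be measurable functions and let S ⊆ ℝ^d be a bounded open set on which p and q are integrable and on which q is constant. Suppose S is partitioned into two disjoint measurable subsets S₁ and S₂ with vol(S₁) = vol(S₂) = vol(S)/2 (where vol denotes Lebesgue measure) and such that p(s₁) ≥ p(s₂) for every s₁ ∈ S₁ and s₂ ∈ S₂. Let W = { x ∈ S : p(x) ≥ q(x) }. Then max( |∫_{S₁} (p(x) − q(x)) dx| , |∫_{S₂} (p(x) − q(x)) dx| ) ≥ (1/2) · ∫_W (p(x) − q(x)) dx. -/

import Mathlib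

open MeasureTheory

private lemma int_le_const {d : ℕ} {A : Set (Fin d → ℝ)} (hA : MeasurableSet A)
    (hfin : volume A ≠ ⊤) {f : (Fin d → ℝ) → ℝ} (hf : IntegrableOn f A volume) {m : ℝ}
    (h : ∀ x ∈ A, f x ≤ m) : ∫ x in A, f x ≤ (volume A).toReal * m := by
  have h2 := setIntegral_mono_on hf (integrableOn_const hfin) hA h
  rwa [setIntegral_const, smul_eq_mul] at h2

private lemma const_le_int {d : ℕ} {A : Set (Fin d → ℝ)} (hA : MeasurableSet A)
    (hfin : volume A ≠ ⊤) {f : (Fin d → ℝ) → ℝ} (hf : IntegrableOn f A volume) {m : ℝ}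
    (h : ∀ x ∈ A, m ≤ f x) : (volume A).toReal * m ≤ ∫ x in A, f x := by
  have h2 := setIntegral_mono_on (integrableOn_const hfin) hf hA h
  rwa [setIntegral_const, smul_eq_mul] at h2

theorem split_capturing_half
    {d : ℕ} (p q : (Fin d → ℝ) → ℝ) (hpm : Measurable p) (hqm : Measurable q)
    (hp0 : ∀ x, 0 ≤ p x) (hq0 : ∀ x, 0 ≤ q x)
    (S : Set (Fin d → ℝ)) (hSopen : IsOpen S) (hSbdd : Bornology.IsBounded S)
    (hpint : IntegrableOn p S volume) (hqint : IntegrableOn q S volume)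
    (hqconst : ∃ c : ℝ, ∀ x ∈ S, q x = c)
    (S₁ S₂ : Set (Fin d → ℝ)) (hS₁m : MeasurableSet S₁) (hS₂m : MeasurableSet S₂)
    (hdisj : Disjoint S₁ S₂) (hunion : S₁ ∪ S₂ = S)
    (hvol₁ : volume S₁ = volume S / 2) (hvol₂ : volume S₂ = volume S / 2)
    (hord : ∀ s₁ ∈ S₁, ∀ s₂ ∈ S₂, p s₂ ≤ p s₁) :
    (1 / 2 : ℝ) * ∫ x in {x ∈ S | q x ≤ p x}, (p x - q x) ≤
      max |∫ x in S₁, (p x - q x)| |∫ x in S₂, (p x - q x)| := by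
  obtain ⟨c, hc⟩ := hqconst
  set W : Set (Fin d → ℝ) := {x ∈ S | q x ≤ p x} with hWdef
  set f : (Fin d → ℝ) → ℝ := fun x => p x - q x with hfdef
  have hS₁S : S₁ ⊆ S := hunion ▸ Set.subset_union_left
  have hS₂S : S₂ ⊆ S := hunion ▸ Set.subset_union_right
  have hWS : W ⊆ S := fun x hx => hx.1
  have hSfin : volume S ≠ ⊤ := hSbdd.measure_lt_top.ne
  -- degenerate case
  by_cases hS0 : volume S = 0
  · have hz : ∀ A : Set (Fin d → ℝ), A ⊆ S → ∫ x in A, f x = 0 := by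
      intro A hA
      rw [Measure.restrict_eq_zero.2 (measure_mono_null hA hS0), integral_zero_measure]
    rw [hz S₁ hS₁S, hz S₂ hS₂S, hz W hWS]
    simp
  have hSm : MeasurableSet S := hSopen.measurableSet
  have hWm : MeasurableSet W := hSm.inter (measurableSet_le hqm hpm)
  have hfint : IntegrableOn f S volume := hpint.sub hqint
  have hfS₁ : IntegrableOn f S₁ volume := hfint.mono_set hS₁S
  have hfS₂ : IntegrableOn f S₂ volume := hfint.mono_set hS₂S
  have hfW : IntegrableOn f W volume := hfint.mono_set hWS
  have hfinS₁ : volume S₁ ≠ ⊤ := ((measure_mono hS₁S).trans_lt hSfin.lt_top).ne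
  have hfinS₂ : volume S₂ ≠ ⊤ := ((measure_mono hS₂S).trans_lt hSfin.lt_top).ne
  have hvol12 : volume S₁ = volume S₂ := by rw [hvol₁, hvol₂]
  -- nonemptiness
  have hS₁ne : S₁.Nonempty := by
    apply nonempty_of_measure_ne_zero (μ := volume) (s := S₁)
    rw [hvol₁]
    simp [ENNReal.div_eq_zero_iff, hS0, hSfin]
  have hS₂ne : S₂.Nonempty := by
    apply nonempty_of_measure_ne_zero (μ := volume) (s := S₂)
    rw [hvol₂]
    simp [ENNReal.div_eq_zero_iff, hS0, hSfin]
  by_cases hcase : (S₂ ∩ W).Nonempty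
  · -- Case 2 : some point of S₂ is in W, hence S₁ ⊆ W
    obtain ⟨s₀, hs₀S₂, hs₀W⟩ := hcase
    have hcs₀ : c ≤ p s₀ := by
      have h2 := hs₀W.2
      rwa [hc s₀ (hS₂S hs₀S₂)] at h2
    have hS₁W : S₁ ⊆ W := fun x hx =>
      ⟨hS₁S hx, by rw [hc x (hS₁S hx)]; exact hcs₀.trans (hord x hx s₀ hs₀S₂)⟩
    obtain ⟨s₁, hs₁⟩ := hS₁ne
    set m := sSup (p '' S₂) with hmdef
    have hbdd : BddAbove (p '' S₂) := ⟨p s₁, by rintro _ ⟨y, hy, rfl⟩; exact hord s₁ hs₁ y hy⟩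
    have hm1 : ∀ x ∈ S₂, p x ≤ m := fun x hx => le_csSup hbdd ⟨x, hx, rfl⟩
    have hm2 : ∀ x ∈ S₁, m ≤ p x := fun x hx =>
      csSup_le ⟨p s₀, s₀, hs₀S₂, rfl⟩ (by rintro _ ⟨y, hy, rfl⟩; exact hord x hx y hy)
    have hmc : c ≤ m := hcs₀.trans (hm1 s₀ hs₀S₂)
    have hWeq : W = S₁ ∪ (S₂ ∩ W) := by
      apply Set.Subset.antisymm
      · intro x hx
        rcases (hunion ▸ hx.1 : x ∈ S₁ ∪ S₂) with h | h
        · exact Or.inl h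
        · exact Or.inr ⟨h, hx⟩
      · rintro x (h | h)
        · exact hS₁W h
        · exact h.2
    have hdisj2 : Disjoint S₁ (S₂ ∩ W) := hdisj.mono_right Set.inter_subset_left
    have hsplit : ∫ x in W, f x = (∫ x in S₁, f x) + ∫ x in S₂ ∩ W, f x := by
      have h2 := setIntegral_union hdisj2 (hS₂m.inter hWm) hfS₁
        (hfW.mono_set (fun x hx => hx.2) : IntegrableOn f (S₂ ∩ W) volume)
      rwa [← hWeq] at h2
    have hb1 : ∫ x in S₂ ∩ W, f x ≤ (volume (S₂ ∩ W)).toReal * (m - c) := by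
      apply int_le_const (hS₂m.inter hWm)
        ((measure_mono Set.inter_subset_left).trans_lt hfinS₂.lt_top).ne
        (hfW.mono_set fun x hx => hx.2)
      intro x hx
      have := hm1 x hx.1
      simp only [hfdef, hc x (hS₂S hx.1)]
      linarith
    have hb2 : (volume (S₂ ∩ W)).toReal * (m - c) ≤ (volume S₁).toReal * (m - c) := by
      apply mul_le_mul_of_nonneg_right _ (by linarith)
      rw [hvol12]
      exact ENNReal.toReal_mono hfinS₂ (measure_mono Set.inter_subset_left)
    have hb3 : (volume S₁).toReal * (m - c) ≤ ∫ x in S₁, f x := by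
      apply const_le_int hS₁m hfinS₁ hfS₁
      intro x hx
      have := hm2 x hx
      simp only [hfdef, hc x (hS₁S hx)]
      linarith
    have h1 : ∫ x in S₁, f x ≤ |∫ x in S₁, f x| := le_abs_self _
    have h2 : |∫ x in S₁, f x| ≤ max |∫ x in S₁, f x| |∫ x in S₂, f x| := le_max_left _ _
    linarith
  · -- Case 1 : S₂ ∩ W = ∅, hence W ⊆ S₁
    have hS₂lt : ∀ x ∈ S₂, p x < c := by
      intro x hx
      by_contra h
      push_neg at h
      exact hcase ⟨x, hx, ⟨hS₂S hx, by rw [hc x (hS₂S hx)]; exact h⟩⟩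
    have hWS₁ : W ⊆ S₁ := by
      intro x hx
      rcases (hunion ▸ hx.1 : x ∈ S₁ ∪ S₂) with h | h
      · exact h
      · exact absurd hx.2 (by rw [hc x (hS₂S h)]; exact not_le.2 (hS₂lt x h))
    have hS₁eq : S₁ = W ∪ (S₁ \ W) := (Set.union_diff_cancel hWS₁).symm
    have hsplit : ∫ x in S₁, f x = (∫ x in W, f x) + ∫ x in S₁ \ W, f x := by
      have h2 := setIntegral_union (Set.disjoint_sdiff_right (s := W) (t := S₁))
        (hS₁m.diff hWm) hfW (hfS₁.mono_set Set.diff_subset)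
      rwa [← hS₁eq] at h2
    have hkey : ∫ x in S₂, f x ≤ ∫ x in S₁ \ W, f x := by
      by_cases hne : (S₁ \ W).Nonempty
      · obtain ⟨t₀, ht₀⟩ := hne
        have ht₀c : p t₀ < c := by
          have h2 : t₀ ∉ W := ht₀.2
          by_contra h
          push_neg at h
          exact h2 ⟨hS₁S ht₀.1, by rw [hc t₀ (hS₁S ht₀.1)]; exact h⟩
        obtain ⟨s₂, hs₂⟩ := hS₂ne
        set M := sInf (p '' S₁) with hMdef
        have hbdd : BddBelow (p '' S₁) := ⟨p s₂, by rintro _ ⟨y, hy, rfl⟩; exact hord y hy s₂ hs₂⟩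
        have hM1 : ∀ x ∈ S₁, M ≤ p x := fun x hx => csInf_le hbdd ⟨x, hx, rfl⟩
        have hM2 : ∀ x ∈ S₂, p x ≤ M := fun x hx =>
          le_csInf ⟨p t₀, t₀, ht₀.1, rfl⟩ (by rintro _ ⟨y, hy, rfl⟩; exact hord y hy x hx)
        have hMc : M < c := (hM1 t₀ ht₀.1).trans_lt ht₀c
        have hb1 : ∫ x in S₂, f x ≤ (volume S₂).toReal * (M - c) := by
          apply int_le_const hS₂m hfinS₂ hfS₂
          intro x hx
          have := hM2 x hx
          simp only [hfdef, hc x (hS₂S hx)]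
          linarith
        have hb2 : (volume S₂).toReal * (M - c) ≤ (volume (S₁ \ W)).toReal * (M - c) := by
          apply mul_le_mul_of_nonpos_right _ (by linarith)
          rw [← hvol12]
          exact ENNReal.toReal_mono hfinS₁ (measure_mono Set.diff_subset)
        have hb3 : (volume (S₁ \ W)).toReal * (M - c) ≤ ∫ x in S₁ \ W, f x := by
          apply const_le_int (hS₁m.diff hWm)
            ((measure_mono Set.diff_subset).trans_lt hfinS₁.lt_top).ne
            (hfS₁.mono_set Set.diff_subset)
          intro x hx
          have := hM1 x hx.1
          simp only [hfdef, hc x (hS₁S hx.1)]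
          linarith
        linarith
      · rw [Set.not_nonempty_iff_eq_empty.1 hne]
        simp only [Measure.restrict_empty, integral_zero_measure]
        apply int_le_const hS₂m hfinS₂ hfS₂ (m := 0) (fun x hx => ?_) |>.trans (by simp)
        have := hS₂lt x hx
        simp only [hfdef, hc x (hS₂S hx)]
        linarith
    have h1 : ∫ x in S₁, f x ≤ |∫ x in S₁, f x| := le_abs_self _
    have h2 : -∫ x in S₂, f x ≤ |∫ x in S₂, f x| := neg_le_abs _
    have h3 : |∫ x in S₁, f x| ≤ max |∫ x in S₁, f x| |∫ x in S₂, f x| := le_max_left _ _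
    have h4 : |∫ x in S₂, f x| ≤ max |∫ x in S₁, f x| |∫ x in S₂, f x| := le_max_right _ _
    linarith
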